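/- Let s, g, b be positive integers, n = s·g·b with n ≥ 3, and let δ, ε be real numbers with 0 < δ < 1/2, 0 < ε < 1/2, and s > ln(n/ε)/δ². Let (Ω, P) be a probability space and X_1, …, X_s : Ω → ZMod g independent random variables, each uniformly distributed on ZMod g. Let w : {1, …, s} → ZMod g → ℝ take values in [0,1], set μ = (1/(s·g)) · ∑_{j=1}^s ∑_{k ∈ ZMod g} w j k, and for i ∈ ZMod g define μ_i = (1/s) · ∑_{j=1}^s w j (X_j + i). Then with probability at least 1 − ε the following holds: for every choice of real numbers v_i (i ∈ ZMod g) satisfying s·μ_i·g·b − g·b + 1 ≤ v_i ≤ s·μ_i·g·b + g·b, one has max_i v_i − min_i v_i < 4·n·δ. -/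

import Mathlib

open MeasureTheory ProbabilityTheory

lemma pp_exp_mul_le (x c : ℝ) (h0 : 0 ≤ c) (h1 : c ≤ 1) :
    Real.exp (x * c) ≤ 1 + c * (Real.exp x - 1) := by
  have h := convexOn_exp.2 (Set.mem_univ (0 : ℝ)) (Set.mem_univ x)
    (by linarith : (0:ℝ) ≤ 1 - c) h0 (by ring)
  simp only [smul_eq_mul, mul_zero, zero_add, Real.exp_zero, mul_one] at h
  calc Real.exp (x * c) = Real.exp (c * x) := by ring_nf
    _ ≤ (1 - c) + c * Real.exp x := h
    _ = 1 + c * (Real.exp x - 1) := by ring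

lemma pp_cosh_bound {u : ℝ} (hu : |u| ≤ 1) : Real.cosh u - 1 ≤ (7/10) * u ^ 2 := by
  have h1 := Real.exp_bound hu (n := 4) (by norm_num)
  have h2 := Real.exp_bound (x := -u) (by rwa [abs_neg]) (n := 4) (by norm_num)
  rw [abs_sub_le_iff] at h1 h2
  have e1 : ∑ m ∈ Finset.range 4, u ^ m / m.factorial = 1 + u + u^2/2 + u^3/6 := by
    simp [Finset.sum_range_succ, Nat.factorial]; try ring
  have e2 : ∑ m ∈ Finset.range 4, (-u) ^ m / m.factorial = 1 - u + u^2/2 - u^3/6 := by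
    simp [Finset.sum_range_succ, Nat.factorial]; try ring
  rw [e1] at h1
  rw [e2] at h2
  have hu2 : u^2 ≤ 1 := by nlinarith [sq_abs u, abs_nonneg u]
  have hu4 : u^4 ≤ u^2 := by nlinarith [sq_nonneg u, sq_nonneg (u^2)]
  have habs : |u| ^ 4 = u ^ 4 := by
    rw [← abs_pow]; exact abs_of_nonneg (by positivity)
  have hfac : ((Nat.factorial 4 : ℝ)) = 24 := by norm_num [Nat.factorial]
  have hA := h1.1
  have hB := h2.1
  rw [abs_neg] at hB
  rw [habs, hfac] at hA hB
  rw [Real.cosh_eq]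
  norm_num at hA hB ⊢
  nlinarith [hA, hB]

lemma pp_factor {g : ℕ} [NeZero g] (f : ZMod g → ℝ) (hf : ∀ k, f k ∈ Set.Icc (0:ℝ) 1) (t : ℝ) :
    ∑ k, Real.exp (t * f k) ≤
      (g : ℝ) * Real.exp ((Real.cosh t - 1)/2 + t * ((1/(g:ℝ)) * ∑ k, f k)) := by
  have hg0 : (0:ℝ) < g := by
    exact_mod_cast Nat.pos_of_ne_zero (NeZero.ne g)
  set p : ℝ := (1/(g:ℝ)) * ∑ k, f k with hp
  have hsum0 : 0 ≤ ∑ k, f k := Finset.sum_nonneg fun k _ => (hf k).1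
  have hsum1 : ∑ k, f k ≤ (g:ℝ) := by
    calc ∑ k, f k ≤ ∑ _k : ZMod g, (1:ℝ) := Finset.sum_le_sum fun k _ => (hf k).2
      _ = (g:ℝ) := by simp [Finset.card_univ, ZMod.card]
  have hp0 : 0 ≤ p := by positivity
  have hp1 : p ≤ 1 := by
    rw [hp, one_div]
    rw [inv_mul_le_iff₀ hg0]
    simpa using hsum1
  have step1 : ∑ k, Real.exp (t * f k) ≤ (g:ℝ) * (1 + p * (Real.exp t - 1)) := by
    calc ∑ k, Real.exp (t * f k) ≤ ∑ k, (1 + f k * (Real.exp t - 1)) :=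
          Finset.sum_le_sum fun k _ => by
            have h := pp_exp_mul_le t (f k) (hf k).1 (hf k).2
            linarith
      _ = (g:ℝ) + (∑ k, f k) * (Real.exp t - 1) := by
          rw [Finset.sum_add_distrib, ← Finset.sum_mul]
          simp [Finset.card_univ, ZMod.card]
      _ = (g:ℝ) * (1 + p * (Real.exp t - 1)) := by
          rw [hp]; field_simp; try ring
  have step2 : Real.exp (-(t * p)) ≤ 1 + p * (Real.exp (-t) - 1) := by
    have h := pp_exp_mul_le (-t) p hp0 hp1
    calc Real.exp (-(t*p)) = Real.exp ((-t)*p) := by ring_nf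
      _ ≤ 1 + p * (Real.exp (-t) - 1) := h
  have hEE : Real.exp t * Real.exp (-t) = 1 := by
    rw [← Real.exp_add]; simp
  have hch : Real.exp t + Real.exp (-t) - 2 = 2 * (Real.cosh t - 1) := by
    rw [Real.cosh_eq]; ring
  have hcosh1 : 0 ≤ Real.cosh t - 1 := by linarith [Real.one_le_cosh t]
  have key : (1 + p * (Real.exp t - 1)) * (1 + p * (Real.exp (-t) - 1))
      ≤ Real.exp ((Real.cosh t - 1)/2) := by
    have hid : (1 + p * (Real.exp t - 1)) * (1 + p * (Real.exp (-t) - 1))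
        = 1 + p * (1 - p) * (Real.exp t + Real.exp (-t) - 2) := by
      linear_combination p^2 * hEE
    rw [hid, hch]
    have hpp : p * (1 - p) ≤ 1/4 := by nlinarith [sq_nonneg (2*p - 1)]
    have : 1 + p * (1-p) * (2 * (Real.cosh t - 1)) ≤ 1 + (Real.cosh t - 1)/2 := by nlinarith
    calc 1 + p * (1-p) * (2 * (Real.cosh t - 1)) ≤ 1 + (Real.cosh t - 1)/2 := this
      _ ≤ Real.exp ((Real.cosh t - 1)/2) := by
          linarith [Real.add_one_le_exp ((Real.cosh t - 1)/2)]
  have hpos1 : 0 ≤ 1 + p * (Real.exp t - 1) := by nlinarith [Real.exp_pos t]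
  have h4 : (1 + p * (Real.exp t - 1)) * Real.exp (-(t*p)) ≤ Real.exp ((Real.cosh t - 1)/2) :=
    le_trans (mul_le_mul_of_nonneg_left step2 hpos1) key
  have h5 : 1 + p * (Real.exp t - 1) ≤ Real.exp ((Real.cosh t - 1)/2 + t * p) := by
    have hx := mul_le_mul_of_nonneg_right h4 (Real.exp_pos (t*p)).le
    rw [mul_assoc, ← Real.exp_add] at hx
    simp only [neg_add_cancel, Real.exp_zero, mul_one] at hx
    rwa [← Real.exp_add] at hx
  calc ∑ k, Real.exp (t * f k) ≤ (g:ℝ) * (1 + p * (Real.exp t - 1)) := step1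
    _ ≤ (g:ℝ) * Real.exp ((Real.cosh t - 1)/2 + t * p) :=
        mul_le_mul_of_nonneg_left h5 hg0.le

lemma pp_chernoff_count {s g : ℕ} [NeZero g] (w : Fin s → ZMod g → ℝ)
    (hw : ∀ j k, w j k ∈ Set.Icc (0:ℝ) 1) (t a : ℝ) (ht : 0 ≤ t) :
    ((Finset.univ.filter (fun κ : Fin s → ZMod g =>
        (∑ j, (1/(g:ℝ)) * ∑ k, w j k) + a ≤ ∑ j, w j (κ j))).card : ℝ)
      ≤ (g:ℝ)^s * Real.exp ((s:ℝ) * (Real.cosh t - 1)/2 - t * a) := by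
  classical
  set m : ℝ := ∑ j, (1/(g:ℝ)) * ∑ k, w j k with hm
  set F : Finset (Fin s → ZMod g) :=
    Finset.univ.filter (fun κ => m + a ≤ ∑ j, w j (κ j)) with hF
  have key1 : (F.card : ℝ) * Real.exp (t*(m+a))
      ≤ ∑ κ : Fin s → ZMod g, Real.exp (t * ∑ j, w j (κ j)) := by
    have h0 : (F.card : ℝ) * Real.exp (t*(m+a)) = ∑ _κ ∈ F, Real.exp (t*(m+a)) := by
      rw [Finset.sum_const, nsmul_eq_mul]
    rw [h0]
    calc ∑ _κ ∈ F, Real.exp (t*(m+a))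
        ≤ ∑ κ ∈ F, Real.exp (t * ∑ j, w j (κ j)) := by
          refine Finset.sum_le_sum fun κ hκ => ?_
          have hκ' : m + a ≤ ∑ j, w j (κ j) := (Finset.mem_filter.1 hκ).2
          exact Real.exp_le_exp.2 (mul_le_mul_of_nonneg_left hκ' ht)
      _ ≤ ∑ κ : Fin s → ZMod g, Real.exp (t * ∑ j, w j (κ j)) :=
          Finset.sum_le_sum_of_subset_of_nonneg (Finset.filter_subset _ _)
            (fun _ _ _ => (Real.exp_pos _).le)
  have key2 : ∑ κ : Fin s → ZMod g, Real.exp (t * ∑ j, w j (κ j))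
      = ∏ j, ∑ k, Real.exp (t * w j k) := by
    rw [Finset.prod_univ_sum]
    rw [Fintype.piFinset_univ]
    refine Finset.sum_congr rfl fun κ _ => ?_
    rw [Finset.mul_sum, Real.exp_sum]
  have key3 : ∏ j, ∑ k, Real.exp (t * w j k)
      ≤ (g:ℝ)^s * Real.exp ((s:ℝ) * (Real.cosh t - 1)/2 + t * m) := by
    calc ∏ j, ∑ k, Real.exp (t * w j k)
        ≤ ∏ j : Fin s, ((g:ℝ) * Real.exp ((Real.cosh t - 1)/2 + t * ((1/(g:ℝ)) * ∑ k, w j k))) :=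
          Finset.prod_le_prod (fun j _ => Finset.sum_nonneg fun k _ => (Real.exp_pos _).le)
            (fun j _ => pp_factor (w j) (hw j) t)
      _ = (g:ℝ)^s * Real.exp ((s:ℝ) * (Real.cosh t - 1)/2 + t * m) := by
          rw [Finset.prod_mul_distrib, Finset.prod_const, ← Real.exp_sum]
          simp only [Finset.card_univ, Fintype.card_fin]
          congr 1
          rw [Finset.sum_add_distrib, Finset.sum_const, ← Finset.mul_sum]
          simp only [Finset.card_univ, Fintype.card_fin, nsmul_eq_mul, hm]
          ring
  refine le_of_mul_le_mul_right ?_ (Real.exp_pos (t*(m+a)))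
  calc (F.card : ℝ) * Real.exp (t*(m+a))
      ≤ ∏ j, ∑ k, Real.exp (t * w j k) := key1.trans (le_of_eq key2)
    _ ≤ (g:ℝ)^s * Real.exp ((s:ℝ) * (Real.cosh t - 1)/2 + t * m) := key3
    _ = ((g:ℝ)^s * Real.exp ((s:ℝ) * (Real.cosh t - 1)/2 - t * a)) * Real.exp (t*(m+a)) := by
        rw [mul_assoc, ← Real.exp_add]
        ring_nf

set_option maxHeartbeats 2000000 in
theorem partial_partition_vmax_sub_vmin_small (s g b n : ℕ)
    (hs : 0 < s) [NeZero g] (hb : 0 < b) (hn : n = s * g * b) (hn3 : 3 ≤ n)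
    (δ ε : ℝ) (hδ0 : 0 < δ) (hδ1 : δ < 1 / 2) (hε0 : 0 < ε) (hε1 : ε < 1 / 2)
    (hsbig : Real.log ((n : ℝ) / ε) / δ ^ 2 < (s : ℝ))
    (Ω : Type*) [MeasurableSpace Ω] (P : Measure Ω) [IsProbabilityMeasure P]
    (X : Fin s → Ω → ZMod g)
    (hXindep : iIndepFun (m := fun _ : Fin s => (⊤ : MeasurableSpace (ZMod g))) X P)
    (hXunif : ∀ (j : Fin s) (k : ZMod g), P {ω | X j ω = k} = (g : ENNReal)⁻¹)
    (w : Fin s → ZMod g → ℝ) (hw : ∀ j k, w j k ∈ Set.Icc (0 : ℝ) 1)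
    (μ : ℝ) (hμ : μ = (1 / ((s : ℝ) * g)) * ∑ j : Fin s, ∑ k : ZMod g, w j k) :
    ENNReal.ofReal (1 - ε) ≤
      P {ω | ∀ v : ZMod g → ℝ,
        (∀ i : ZMod g,
            (s : ℝ) * ((1 / (s : ℝ)) * ∑ j : Fin s, w j (X j ω + i)) * g * b - g * b + 1
                ≤ v i ∧
              v i ≤ (s : ℝ) * ((1 / (s : ℝ)) * ∑ j : Fin s, w j (X j ω + i)) * g * b + g * b) →
          Finset.univ.sup'
              (⟨(0 : ZMod g), Finset.mem_univ _⟩ : (Finset.univ : Finset (ZMod g)).Nonempty) v -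
            Finset.univ.inf'
              (⟨(0 : ZMod g), Finset.mem_univ _⟩ : (Finset.univ : Finset (ZMod g)).Nonempty) v
              < 4 * n * δ} := by
  classical
  have hg0 : 0 < g := Nat.pos_of_ne_zero (NeZero.ne g)
  have hsR : (0:ℝ) < s := by exact_mod_cast hs
  have hgR : (0:ℝ) < g := by exact_mod_cast hg0
  have hbR : (0:ℝ) < b := by exact_mod_cast hb
  have hnR : (n:ℝ) = (s:ℝ) * g * b := by rw [hn]; push_cast; ring
  have hn3R : (3:ℝ) ≤ n := by exact_mod_cast hn3
  have hn0 : (0:ℝ) < n := by linarith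
  have hratio : (6:ℝ) ≤ (n:ℝ)/ε := by
    rw [le_div_iff₀ hε0]
    nlinarith
  have hL53 : (5:ℝ)/3 < Real.log ((n:ℝ)/ε) := by
    rw [Real.lt_log_iff_exp_lt (by positivity)]
    have h5 : Real.exp 5 < 216 := by
      have h1 : Real.exp 1 < 2.7182818286 := Real.exp_one_lt_d9
      calc Real.exp 5 = (Real.exp 1)^5 := by
            rw [← Real.exp_nat_mul]; norm_num
        _ < 2.7182818286^5 := by
            exact pow_lt_pow_left₀ h1 (Real.exp_pos 1).le (by norm_num)
        _ < 216 := by norm_num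
    have hcube : (Real.exp (5/3))^3 < 6^3 := by
      rw [← Real.exp_nat_mul]
      norm_num
      linarith
    have h6 : Real.exp (5/3) < 6 :=
      lt_of_pow_lt_pow_left₀ 3 (by norm_num : (0:ℝ) ≤ 6) hcube
    exact h6.trans_le hratio
  have hsd2 : Real.log ((n:ℝ)/ε) < (s:ℝ) * δ^2 := by
    rw [div_lt_iff₀ (by positivity)] at hsbig; linarith
  -- the good event
  set Egood : Set Ω :=
    {ω | ∀ i : ZMod g, |(1/(s:ℝ)) * (∑ j, w j (X j ω + i)) - μ| < (17/10) * δ} with hEgood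
  -- Step A : Egood is contained in the target event
  have hsubset : Egood ⊆ {ω | ∀ v : ZMod g → ℝ,
        (∀ i : ZMod g,
            (s : ℝ) * ((1 / (s : ℝ)) * ∑ j : Fin s, w j (X j ω + i)) * g * b - g * b + 1
                ≤ v i ∧
              v i ≤ (s : ℝ) * ((1 / (s : ℝ)) * ∑ j : Fin s, w j (X j ω + i)) * g * b + g * b) →
          Finset.univ.sup'
              (⟨(0 : ZMod g), Finset.mem_univ _⟩ : (Finset.univ : Finset (ZMod g)).Nonempty) v -
            Finset.univ.inf'
              (⟨(0 : ZMod g), Finset.mem_univ _⟩ : (Finset.univ : Finset (ZMod g)).Nonempty) v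
              < 4 * n * δ} := by
    intro ω hω
    intro v hv
    obtain ⟨imax, -, hmax⟩ := Finset.exists_mem_eq_sup'
      (⟨(0 : ZMod g), Finset.mem_univ _⟩ : (Finset.univ : Finset (ZMod g)).Nonempty) v
    obtain ⟨imin, -, hmin⟩ := Finset.exists_mem_eq_inf'
      (⟨(0 : ZMod g), Finset.mem_univ _⟩ : (Finset.univ : Finset (ZMod g)).Nonempty) v
    rw [hmax, hmin]
    have h1 := (hv imax).2
    have h2 := (hv imin).1
    have ha := abs_lt.1 (hω imax)
    have hb' := abs_lt.1 (hω imin)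
    set A : ℝ := (1/(s:ℝ)) * ∑ j, w j (X j ω + imax) with hA
    set B : ℝ := (1/(s:ℝ)) * ∑ j, w j (X j ω + imin) with hB
    have hgb : 2*((g:ℝ)*b) < (3/5) * n * δ := by
      have h3 : (5:ℝ)/3 < (s:ℝ)*δ^2 := hL53.trans hsd2
      have h4 : (g:ℝ)*b*(5/3) < (g:ℝ)*b*((s:ℝ)*δ^2) :=
        mul_lt_mul_of_pos_left h3 (by positivity)
      have h5 : (g:ℝ)*b*((s:ℝ)*δ^2) = (n:ℝ)*δ*δ := by rw [hnR]; ring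
      have h6 : (g:ℝ)*b < (3/5)*((n:ℝ)*δ*δ) := by linarith
      have h7 : (n:ℝ)*δ*δ < (n:ℝ)*δ*(1/2) :=
        mul_lt_mul_of_pos_left hδ1 (mul_pos hn0 hδ0)
      nlinarith
    have hAB : A - B < (17/5)*δ := by linarith
    have hABn : (n:ℝ)*(A - B) < (n:ℝ)*((17/5)*δ) := mul_lt_mul_of_pos_left hAB hn0
    have hsgb : (s:ℝ)*A*(g:ℝ)*b - (s:ℝ)*B*(g:ℝ)*b = (n:ℝ)*(A-B) := by rw [hnR]; ring
    have hn45 : (n:ℝ)*((17/5)*δ) + (3/5)*(n:ℝ)*δ = 4*(n:ℝ)*δ := by ring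
    linarith
  -- Step B : probability of the complement of Egood
  set Bad : Finset (Fin s → ZMod g) :=
    Finset.univ.filter
      (fun κ => ∃ i : ZMod g, (17/10)*δ ≤ |(1/(s:ℝ)) * (∑ j, w j (κ j + i)) - μ|) with hBad
  have hEcompl : Egoodᶜ ⊆ ⋃ κ ∈ Bad, ⋂ j, X j ⁻¹' {κ j} := by
    intro ω hω
    have hω' : ∃ i : ZMod g, (17/10)*δ ≤ |(1/(s:ℝ)) * (∑ j, w j (X j ω + i)) - μ| := by
      by_contra hcon
      push_neg at hcon
      exact hω fun i => hcon i
    refine Set.mem_iUnion₂.2 ⟨fun j => X j ω, ?_, ?_⟩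
    · exact Finset.mem_filter.2 ⟨Finset.mem_univ _, hω'⟩
    · exact Set.mem_iInter.2 fun j => rfl
  have hcyl : ∀ κ : Fin s → ZMod g,
      P (⋂ j, X j ⁻¹' {κ j}) = ((g:ENNReal))⁻¹ ^ s := by
    intro κ
    have h := hXindep.measure_inter_preimage_eq_mul (S := Finset.univ)
      (sets := fun j => {κ j}) (fun i _ => MeasurableSpace.measurableSet_top)
    have h2 : (⋂ j ∈ Finset.univ, X j ⁻¹' {κ j}) = ⋂ j, X j ⁻¹' {κ j} := by simp
    rw [← h2, h]
    have h4 : ∀ j : Fin s, P (X j ⁻¹' {κ j}) = (g:ENNReal)⁻¹ := fun j => hXunif j (κ j)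
    simp only [h4]
    rw [Finset.prod_const, Finset.card_univ, Fintype.card_fin]
  -- the shifted weights
  have hshift : ∀ (i : ZMod g) (j : Fin s), ∑ k, w j (k + i) = ∑ k, w j k :=
    fun i j => Equiv.sum_comp (Equiv.addRight i) (w j)
  have hm : ∑ j : Fin s, (1/(g:ℝ)) * ∑ k, w j k = (s:ℝ) * μ := by
    rw [hμ, ← Finset.mul_sum]
    field_simp
  set Up : ZMod g → Finset (Fin s → ZMod g) := fun i =>
    Finset.univ.filter (fun κ =>
      (∑ j, (1/(g:ℝ)) * ∑ k, w j (k + i)) + (s:ℝ)*((17/10)*δ) ≤ ∑ j, w j (κ j + i)) with hUpdef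
  set Lo : ZMod g → Finset (Fin s → ZMod g) := fun i =>
    Finset.univ.filter (fun κ =>
      (∑ j, (1/(g:ℝ)) * ∑ k, (1 - w j (k + i))) + (s:ℝ)*((17/10)*δ)
        ≤ ∑ j, (1 - w j (κ j + i))) with hLodef
  have hsmu : ∀ i : ZMod g, ∑ j : Fin s, (1/(g:ℝ)) * ∑ k, w j (k + i) = (s:ℝ) * μ := by
    intro i
    calc ∑ j : Fin s, (1/(g:ℝ)) * ∑ k, w j (k + i)
        = ∑ j : Fin s, (1/(g:ℝ)) * ∑ k, w j k := by
          refine Finset.sum_congr rfl fun j _ => ?_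
          rw [hshift i j]
      _ = (s:ℝ) * μ := hm
  have hBadsub : Bad ⊆ Finset.univ.biUnion (fun i : ZMod g => Up i ∪ Lo i) := by
    intro κ hκ
    obtain ⟨i, hi⟩ := (Finset.mem_filter.1 hκ).2
    refine Finset.mem_biUnion.2 ⟨i, Finset.mem_univ _, ?_⟩
    have hsi : (s:ℝ) * ((1/(s:ℝ)) * ∑ j, w j (κ j + i)) = ∑ j, w j (κ j + i) := by
      field_simp
    rcases le_abs.1 hi with h | h
    · refine Finset.mem_union_left _ (Finset.mem_filter.2 ⟨Finset.mem_univ _, ?_⟩)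
      rw [hsmu i]
      have h' : (s:ℝ) * ((17/10)*δ) ≤ (s:ℝ) * ((1/(s:ℝ)) * (∑ j, w j (κ j + i)) - μ) :=
        mul_le_mul_of_nonneg_left h hsR.le
      rw [mul_sub, hsi] at h'
      linarith
    · refine Finset.mem_union_right _ (Finset.mem_filter.2 ⟨Finset.mem_univ _, ?_⟩)
      have e1 : ∑ j : Fin s, (1/(g:ℝ)) * ∑ k, (1 - w j (k + i))
          = (s:ℝ) - (s:ℝ)*μ := by
        have : ∀ j : Fin s, ∑ k, (1 - w j (k + i)) = (g:ℝ) - ∑ k, w j (k + i) := by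
          intro j
          rw [Finset.sum_sub_distrib, Finset.sum_const, Finset.card_univ, ZMod.card]
          simp
        simp only [this]
        have e2 : ∑ j : Fin s, (1/(g:ℝ)) * ((g:ℝ) - ∑ k, w j (k + i))
            = ∑ j : Fin s, ((1:ℝ) - (1/(g:ℝ)) * ∑ k, w j (k + i)) := by
          refine Finset.sum_congr rfl fun j _ => ?_
          field_simp
        rw [e2, Finset.sum_sub_distrib, Finset.sum_const, Finset.card_univ,
          Fintype.card_fin, hsmu i]
        simp
      have e3 : ∑ j : Fin s, ((1:ℝ) - w j (κ j + i))
          = (s:ℝ) - ∑ j, w j (κ j + i) := by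
        rw [Finset.sum_sub_distrib, Finset.sum_const, Finset.card_univ, Fintype.card_fin]
        simp
      rw [e1, e3]
      have h' : (s:ℝ) * ((17/10)*δ) ≤ (s:ℝ) * (-((1/(s:ℝ)) * (∑ j, w j (κ j + i)) - μ)) :=
        mul_le_mul_of_nonneg_left h hsR.le
      rw [mul_neg, mul_sub, hsi] at h'
      linarith
  -- cardinality bounds
  have hcosh : Real.cosh (2*δ) - 1 ≤ (7/10) * (2*δ)^2 :=
    pp_cosh_bound (by rw [abs_of_nonneg (by linarith)]; linarith)
  have hexparg :
      (s:ℝ) * (Real.cosh (2*δ) - 1)/2 - (2*δ) * ((s:ℝ)*((17/10)*δ)) ≤ -(2*(s:ℝ)*δ^2) := by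
    have h2 : (s:ℝ)*(Real.cosh (2*δ) - 1) ≤ (s:ℝ)*((7/10)*(2*δ)^2) :=
      mul_le_mul_of_nonneg_left hcosh hsR.le
    nlinarith
  have hUp : ∀ i : ZMod g, ((Up i).card : ℝ) ≤ (g:ℝ)^s * Real.exp (-(2*(s:ℝ)*δ^2)) := by
    intro i
    have h := pp_chernoff_count (fun j k => w j (k + i)) (fun j k => hw j (k + i))
      (2*δ) ((s:ℝ)*((17/10)*δ)) (by positivity)
    refine h.trans ?_
    refine mul_le_mul_of_nonneg_left ?_ (by positivity)
    exact Real.exp_le_exp.2 hexparg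
  have hLo : ∀ i : ZMod g, ((Lo i).card : ℝ) ≤ (g:ℝ)^s * Real.exp (-(2*(s:ℝ)*δ^2)) := by
    intro i
    have hw' : ∀ (j : Fin s) (k : ZMod g), (1 - w j (k + i)) ∈ Set.Icc (0:ℝ) 1 :=
      fun j k => ⟨by linarith [(hw j (k + i)).2], by linarith [(hw j (k + i)).1]⟩
    have h := pp_chernoff_count (fun j k => 1 - w j (k + i))
      (fun j k => hw' j k)
      (2*δ) ((s:ℝ)*((17/10)*δ)) (by positivity)
    refine h.trans ?_
    refine mul_le_mul_of_nonneg_left ?_ (by positivity)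
    exact Real.exp_le_exp.2 hexparg
  have hBadcard : (Bad.card : ℝ) ≤ (2*(g:ℝ)) * ((g:ℝ)^s * Real.exp (-(2*(s:ℝ)*δ^2))) := by
    have h1 : Bad.card ≤ ∑ i : ZMod g, (Up i ∪ Lo i).card :=
      (Finset.card_le_card hBadsub).trans (Finset.card_biUnion_le)
    calc (Bad.card : ℝ) ≤ ((∑ i : ZMod g, (Up i ∪ Lo i).card : ℕ) : ℝ) := by exact_mod_cast h1
      _ = ∑ i : ZMod g, (((Up i ∪ Lo i).card : ℕ) : ℝ) := by push_cast; rfl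
      _ ≤ ∑ _i : ZMod g, 2*((g:ℝ)^s * Real.exp (-(2*(s:ℝ)*δ^2))) := by
          refine Finset.sum_le_sum fun i _ => ?_
          have hcu : ((Up i ∪ Lo i).card : ℝ) ≤ ((Up i).card : ℝ) + ((Lo i).card : ℝ) := by
            exact_mod_cast Finset.card_union_le (Up i) (Lo i)
          linarith [hUp i, hLo i]
      _ = (2*(g:ℝ)) * ((g:ℝ)^s * Real.exp (-(2*(s:ℝ)*δ^2))) := by
          rw [Finset.sum_const, Finset.card_univ, ZMod.card, nsmul_eq_mul]
          ring
  have hexp : Real.exp (-(2*(s:ℝ)*δ^2)) ≤ (ε/(n:ℝ))^2 := by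
    have h1 : Real.exp (-(2*(s:ℝ)*δ^2)) ≤ Real.exp (-(2*Real.log ((n:ℝ)/ε))) :=
      Real.exp_le_exp.2 (by nlinarith)
    have h2 : Real.exp (-(2*Real.log ((n:ℝ)/ε))) = (ε/(n:ℝ))^2 := by
      rw [Real.exp_neg]
      rw [show (2:ℝ)*Real.log ((n:ℝ)/ε) = Real.log (((n:ℝ)/ε)^2) by
        rw [Real.log_pow]; push_cast; ring]
      rw [Real.exp_log (by positivity), ← inv_pow, inv_div]
    exact h1.trans_eq h2
  have hfinalR : (Bad.card : ℝ) ≤ ε * (g:ℝ)^s := by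
    have hgn : (g:ℝ) ≤ n := by
      have hs1 : (1:ℝ) ≤ s := by exact_mod_cast hs
      have hb1 : (1:ℝ) ≤ b := by exact_mod_cast hb
      rw [hnR]
      have h1 : (1:ℝ)*1 ≤ (s:ℝ)*b := mul_le_mul hs1 hb1 zero_le_one (by linarith)
      nlinarith
    have key : 2*(g:ℝ)*ε ≤ (n:ℝ)^2 := by nlinarith
    have hgs : (0:ℝ) < (g:ℝ)^s := by positivity
    have h2 : (2*(g:ℝ)) * ((g:ℝ)^s * (ε/(n:ℝ))^2) ≤ ε * (g:ℝ)^s := by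
      rw [div_pow]
      have e : (2*(g:ℝ)) * ((g:ℝ)^s * (ε^2/(n:ℝ)^2)) = ((g:ℝ)^s * ε) * ((2*(g:ℝ)*ε)/(n:ℝ)^2) := by
        field_simp
      rw [e]
      have hle1 : (2*(g:ℝ)*ε)/(n:ℝ)^2 ≤ 1 := by
        rw [div_le_one (by positivity)]
        exact key
      calc ((g:ℝ)^s * ε) * ((2*(g:ℝ)*ε)/(n:ℝ)^2) ≤ ((g:ℝ)^s * ε) * 1 := by
            refine mul_le_mul_of_nonneg_left hle1 (by positivity)
        _ = ε * (g:ℝ)^s := by ring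
    calc (Bad.card : ℝ) ≤ (2*(g:ℝ)) * ((g:ℝ)^s * Real.exp (-(2*(s:ℝ)*δ^2))) := hBadcard
      _ ≤ (2*(g:ℝ)) * ((g:ℝ)^s * (ε/(n:ℝ))^2) := by
          refine mul_le_mul_of_nonneg_left ?_ (by positivity)
          exact mul_le_mul_of_nonneg_left hexp (by positivity)
      _ ≤ ε * (g:ℝ)^s := h2
  have hPbad : P Egoodᶜ ≤ ENNReal.ofReal ε := by
    have hstep : P Egoodᶜ ≤ (Bad.card : ENNReal) * ((g:ENNReal))⁻¹ ^ s := by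
      calc P Egoodᶜ ≤ P (⋃ κ ∈ Bad, ⋂ j, X j ⁻¹' {κ j}) := measure_mono hEcompl
        _ ≤ ∑ κ ∈ Bad, P (⋂ j, X j ⁻¹' {κ j}) := measure_biUnion_finset_le Bad _
        _ = ∑ _κ ∈ Bad, ((g:ENNReal))⁻¹ ^ s := Finset.sum_congr rfl fun κ _ => hcyl κ
        _ = (Bad.card : ENNReal) * ((g:ENNReal))⁻¹ ^ s := by
            rw [Finset.sum_const, nsmul_eq_mul]
    refine hstep.trans ?_
    have e1 : ((g:ENNReal))⁻¹ ^ s = ENNReal.ofReal (((g:ℝ))⁻¹ ^ s) := by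
      rw [ENNReal.ofReal_pow (by positivity), ENNReal.ofReal_inv_of_pos hgR,
        ENNReal.ofReal_natCast]
    have e2 : (Bad.card : ENNReal) = ENNReal.ofReal (Bad.card : ℝ) := by
      rw [ENNReal.ofReal_natCast]
    rw [e1, e2, ← ENNReal.ofReal_mul (by positivity)]
    apply ENNReal.ofReal_le_ofReal
    have hgs : (0:ℝ) < (g:ℝ)^s := by positivity
    have h3 : (Bad.card : ℝ) * (((g:ℝ))⁻¹ ^ s) ≤ (ε * (g:ℝ)^s) * (((g:ℝ))⁻¹ ^ s) :=
      mul_le_mul_of_nonneg_right hfinalR (by positivity)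
    have h4 : (ε * (g:ℝ)^s) * (((g:ℝ))⁻¹ ^ s) = ε := by
      rw [inv_pow, mul_assoc, mul_inv_cancel₀ hgs.ne', mul_one]
    linarith
  have h1le : (1:ENNReal) ≤ P Egood + ENNReal.ofReal ε := by
    calc (1:ENNReal) = P Set.univ := measure_univ.symm
      _ = P (Egood ∪ Egoodᶜ) := by rw [Set.union_compl_self]
      _ ≤ P Egood + P Egoodᶜ := measure_union_le _ _
      _ ≤ P Egood + ENNReal.ofReal ε := add_le_add le_rfl hPbad
  calc ENNReal.ofReal (1-ε) = 1 - ENNReal.ofReal ε := by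
        rw [ENNReal.ofReal_sub _ hε0.le, ENNReal.ofReal_one]
    _ ≤ P Egood := tsub_le_iff_right.2 h1le
    _ ≤ _ := measure_mono hsubset
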